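/- Let $D_n = \hat{M}_n - M_n$ as above with $n\geq 2$. Then $\mathrm{Var}(D_n) \leq \frac{1}{n^2}\mathbb{E}[K_{n,1}] + \frac{2}{n(n-1)}\mathbb{E}[K_{n,2}]$. -/

import Mathlib

open MeasureTheory ProbabilityTheory Real Filter

theorem stmt
    {Ω : Type*} [MeasurableSpace Ω] (μ : Measure Ω) [IsProbabilityMeasure μ]
    (p : ℕ → ℝ) (hp : ∀ j, p j ∈ Set.Ioo (0 : ℝ) 1) (hsum : Summable p)
    (n : ℕ) (X : ℕ → Ω → ℕ)
    (hmeas : ∀ j, Measurable (X j))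
    (hindep : iIndepFun X μ)
    (hbin : ∀ j k, μ {ω | X j ω = k} =
      ENNReal.ofReal ((n.choose k : ℝ) * p j ^ k * (1 - p j) ^ (n - k)))
    (hn : 2 ≤ n) :
    variance (fun ω => (∑' j, if X j ω = 1 then (1 : ℝ) else 0) / n
        - ∑' j, if X j ω = 0 then p j else 0) μ
      ≤ (1 / n ^ 2) * (∫ ω, (∑' j, if X j ω = 1 then (1 : ℝ) else 0) ∂μ)
        + (2 / (n * (n - 1))) *
            ∫ ω, (∑' j, if X j ω = 2 then (1 : ℝ) else 0) ∂μ := by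
  classical
  have hn2 : (2:ℝ) ≤ (n:ℝ) := by exact_mod_cast hn
  have hnpos : (0:ℝ) < (n:ℝ) := by linarith
  have hn1 : (0:ℝ) < (n:ℝ) - 1 := by linarith
  set q : ℕ → ℕ → ℝ := fun k j => (n.choose k : ℝ) * p j ^ k * (1 - p j) ^ (n - k) with hq
  set Y : ℕ → Ω → ℝ := fun j ω => (if X j ω = 1 then (1 : ℝ) else 0) / n
      - (if X j ω = 0 then p j else 0) with hY
  set D : Ω → ℝ := fun ω => (∑' j, if X j ω = 1 then (1 : ℝ) else 0) / n
      - ∑' j, if X j ω = 0 then p j else 0 with hD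
  set S : ℕ → Ω → ℝ := fun N ω => ∑ j ∈ Finset.range N, Y j ω with hS
  have hq_nonneg : ∀ k j, 0 ≤ q k j := by
    intro k j
    have h1 := (hp j).1; have h2 := (hp j).2
    apply mul_nonneg (mul_nonneg (by positivity) (by positivity))
    exact pow_nonneg (by linarith) _
  have hms : ∀ j k, MeasurableSet {ω | X j ω = k} :=
    fun j k => (hmeas j) (measurableSet_singleton k)
  have hmI : ∀ (j k : ℕ) (c : ℝ), Measurable (fun ω => if X j ω = k then c else 0) :=
    fun j k c => Measurable.ite (hms j k) measurable_const measurable_const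
  have hIndEq : ∀ (j k : ℕ) (c : ℝ), (fun ω => if X j ω = k then c else 0)
      = Set.indicator {ω | X j ω = k} (fun _ => c) := by
    intro j k c; funext ω; simp [Set.indicator_apply]
  have hIndInt : ∀ (j k : ℕ) (c : ℝ), Integrable (fun ω => if X j ω = k then c else 0) μ := by
    intro j k c; rw [hIndEq]; exact (integrable_const c).indicator (hms j k)
  have hInd : ∀ (j k : ℕ) (c : ℝ), ∫ ω, (if X j ω = k then c else 0) ∂μ = c * q k j := by
    intro j k c
    rw [hIndEq, integral_indicator_const c (hms j k), measureReal_def, hbin j k,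
      ENNReal.toReal_ofReal (hq_nonneg k j), smul_eq_mul, mul_comm]
  have hYmeas : ∀ j, Measurable (Y j) := by
    intro j
    exact ((hmI j 1 1).div_const _).sub (hmI j 0 (p j))
  have hYbd : ∀ j ω, ‖Y j ω‖ ≤ 1 := by
    intro j ω
    have h1 := (hp j).1; have h2 := (hp j).2
    rw [Real.norm_eq_abs, abs_le, hY]
    have hinv : (1:ℝ)/n ≤ 1 := by rw [div_le_one hnpos]; linarith
    have hinv0 : (0:ℝ) < 1/n := by positivity
    constructor <;> simp only <;> split_ifs with ha hb hb <;> try omega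
    all_goals simp only [zero_div, sub_zero, zero_sub]
    all_goals linarith
  have hY2 : ∀ j, MemLp (Y j) 2 μ := fun j =>
    MemLp.of_bound (hYmeas j).aestronglyMeasurable 1 (ae_of_all _ (hYbd j))
  have hYintble : ∀ j, Integrable (Y j) μ := by
    intro j
    have := ((hIndInt j 1 1).div_const (n:ℝ)).sub (hIndInt j 0 (p j))
    exact this
  have hYint_val : ∀ j, ∫ ω, Y j ω ∂μ = q 1 j / n - p j * q 0 j := by
    intro j
    simp only [hY]
    rw [integral_sub ((hIndInt j 1 1).div_const (n:ℝ)) (hIndInt j 0 (p j)),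
      integral_div, hInd j 1 1, hInd j 0 (p j)]
    ring
  -- variance of each Y j
  have hVarY : ∀ j, variance (Y j) μ ≤ (1/(n:ℝ)^2) * q 1 j + p j ^ 2 * q 0 j := by
    intro j
    refine (variance_le_expectation_sq (hYmeas j).aestronglyMeasurable).trans ?_
    have hsq : (Y j ^ 2 : Ω → ℝ) = fun ω =>
        (if X j ω = 1 then (1/(n:ℝ)^2) else 0) + (if X j ω = 0 then p j ^ 2 else 0) := by
      funext ω
      simp only [Pi.pow_apply, hY]
      split_ifs with ha hb hb
      · omega
      · ring
      · ring
      · ring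
    rw [hsq, integral_add (hIndInt j 1 _) (hIndInt j 0 _), hInd j 1 _, hInd j 0 _]
  have hTerm : ∀ j, p j ^ 2 * q 0 j ≤ (2/((n:ℝ)*((n:ℝ)-1))) * q 2 j := by
    intro j
    have h1 := (hp j).1; have h2 := (hp j).2
    have e1 : (1 - p j)^n = (1 - p j)^(n-2) * (1 - p j)^2 := by
      rw [← pow_add, Nat.sub_add_cancel hn]
    have hq0 : q 0 j = (1 - p j)^n := by simp [hq]
    have hch : (n.choose 2 : ℝ) = (n:ℝ) * ((n:ℝ) - 1) / 2 := Nat.cast_choose_two ℝ n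
    have hq2 : (2/((n:ℝ)*((n:ℝ)-1))) * q 2 j = p j ^ 2 * (1 - p j)^(n-2) := by
      simp only [hq, hch]
      field_simp
    rw [hq0, hq2, e1]
    have hpow : (0:ℝ) ≤ (1 - p j)^(n-2) := pow_nonneg (by linarith) _
    have h3 : (1 - p j)^2 ≤ 1 := by nlinarith
    nlinarith [mul_le_mul_of_nonneg_left h3 (mul_nonneg (sq_nonneg (p j)) hpow)]
  -- summability of the q's
  have hqle : ∀ k j, 1 ≤ k → q k j ≤ (n.choose k : ℝ) * p j := by
    intro k j hk
    have h1 := (hp j).1; have h2 := (hp j).2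
    have hp1 : p j ^ k ≤ p j := pow_le_of_le_one (by linarith) (by linarith) (by omega)
    have hp2 : (1 - p j)^(n-k) ≤ 1 := pow_le_one₀ (by linarith) (by linarith)
    have hp3 : (0:ℝ) ≤ (1 - p j)^(n-k) := pow_nonneg (by linarith) _
    have hc : (0:ℝ) ≤ (n.choose k : ℝ) := Nat.cast_nonneg _
    calc (n.choose k : ℝ) * p j ^ k * (1 - p j)^(n-k)
        ≤ (n.choose k : ℝ) * p j ^ k * 1 := by
          nlinarith [mul_le_mul_of_nonneg_left hp2 (mul_nonneg hc (pow_nonneg h1.le k))]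
      _ = (n.choose k : ℝ) * p j ^ k := by ring
      _ ≤ (n.choose k : ℝ) * p j := by nlinarith
  have hqsum : ∀ k, 1 ≤ k → Summable (fun j => q k j) := by
    intro k hk
    exact Summable.of_nonneg_of_le (fun j => hq_nonneg k j) (fun j => hqle k j hk)
      (hsum.mul_left _)
  -- lintegral of nonneg integrable functions
  have key : ∀ (f : Ω → ℝ), Integrable f μ → (∀ ω, 0 ≤ f ω) →
      ∫⁻ ω, (‖f ω‖₊ : ENNReal) ∂μ = ENNReal.ofReal (∫ ω, f ω ∂μ) := by
    intro f hf hf0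
    rw [ofReal_integral_eq_lintegral_ofReal hf (ae_of_all _ hf0)]
    refine lintegral_congr fun ω => ?_
    rw [← Real.enorm_eq_ofReal (hf0 ω), enorm_eq_nnnorm]
  have hIndnn : ∀ (j k : ℕ) (c : ℝ), 0 ≤ c → ∀ ω, (0:ℝ) ≤ (if X j ω = k then c else 0) := by
    intro j k c hc ω; split_ifs <;> simp [hc]
  have hlintInd : ∀ (j k : ℕ), ∫⁻ ω, (‖if X j ω = k then (1:ℝ) else 0‖₊ : ENNReal) ∂μ
      = ENNReal.ofReal (q k j) := by
    intro j k
    rw [key _ (hIndInt j k 1) (hIndnn j k 1 zero_le_one), hInd j k 1, one_mul]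
  -- integral of the tsums on the RHS
  have hIntTsum : ∀ k, 1 ≤ k →
      ∫ ω, (∑' j, if X j ω = k then (1:ℝ) else 0) ∂μ = ∑' j, q k j := by
    intro k hk
    rw [integral_tsum (fun j => (hmI j k 1).aestronglyMeasurable) ?_]
    · exact tsum_congr fun j => hInd j k 1 |>.trans (one_mul _)
    · simp only [enorm_eq_nnnorm]
      rw [tsum_congr (fun j => hlintInd j k),
        ← ENNReal.ofReal_tsum_of_nonneg (fun j => hq_nonneg k j) (hqsum k hk)]
      exact ENNReal.ofReal_ne_top
  -- a.e. summability of the K1 indicators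
  have hAae : ∀ᵐ ω ∂μ, Summable (fun j => if X j ω = 1 then (1:ℝ) else 0) := by
    have hfin : ∫⁻ ω, ∑' j, (‖if X j ω = 1 then (1:ℝ) else 0‖₊ : ENNReal) ∂μ ≠ ⊤ := by
      rw [lintegral_tsum (fun j => ((hmI j 1 1).nnnorm.coe_nnreal_ennreal).aemeasurable),
        tsum_congr (fun j => hlintInd j 1),
        ← ENNReal.ofReal_tsum_of_nonneg (fun j => hq_nonneg 1 j) (hqsum 1 le_rfl)]
      exact ENNReal.ofReal_ne_top
    have hmeas' : Measurable fun ω => ∑' j, (‖if X j ω = 1 then (1:ℝ) else 0‖₊ : ENNReal) :=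
      Measurable.ennreal_tsum fun j => (hmI j 1 1).nnnorm.coe_nnreal_ennreal
    filter_upwards [ae_lt_top hmeas' hfin] with ω hω
    have h1 : Summable fun j => ‖if X j ω = 1 then (1:ℝ) else 0‖₊ :=
      ENNReal.tsum_coe_ne_top_iff_summable.1 hω.ne
    refine Summable.of_norm ?_
    simpa [← coe_nnnorm] using NNReal.summable_coe.2 h1
  have hBsummable : ∀ ω, Summable (fun j => if X j ω = 0 then p j else 0) := by
    intro ω
    refine Summable.of_nonneg_of_le (fun j => ?_) (fun j => ?_) hsum
    · split_ifs; exacts [(hp j).1.le, le_rfl]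
    · split_ifs; exacts [le_rfl, (hp j).1.le]
  -- pointwise norm bound for Y in terms of indicators
  set g : ℕ → Ω → ℝ := fun j ω => (if X j ω = 1 then (1:ℝ) else 0) / n
      + (if X j ω = 0 then p j else 0) with hg
  have hgint : ∀ j, Integrable (g j) μ :=
    fun j => ((hIndInt j 1 1).div_const (n:ℝ)).add (hIndInt j 0 (p j))
  have hg0 : ∀ j ω, 0 ≤ g j ω := by
    intro j ω
    have h1 := (hp j).1
    simp only [hg]
    split_ifs <;> positivity
  have hgval : ∀ j, ∫ ω, g j ω ∂μ = q 1 j / n + p j * q 0 j := by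
    intro j
    simp only [hg]
    rw [integral_add ((hIndInt j 1 1).div_const (n:ℝ)) (hIndInt j 0 (p j)),
      integral_div, hInd j 1 1, hInd j 0 (p j)]
    ring
  have hYg : ∀ j ω, ‖Y j ω‖ ≤ g j ω := by
    intro j ω
    have h1 := (hp j).1
    simp only [hY, hg]
    refine (norm_sub_le _ _).trans ?_
    have e1 : ‖(if X j ω = 1 then (1:ℝ) else 0) / (n:ℝ)‖ = (if X j ω = 1 then (1:ℝ) else 0) / n := by
      rw [Real.norm_of_nonneg]; split_ifs <;> positivity
    have e2 : ‖(if X j ω = 0 then p j else 0)‖ = (if X j ω = 0 then p j else 0) := by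
      rw [Real.norm_of_nonneg]; split_ifs <;> positivity
    rw [e1, e2]
  have hgbound : ∀ j, q 1 j / n + p j * q 0 j ≤ 2 * p j := by
    intro j
    have h1 := (hp j).1; have h2 := (hp j).2
    have hq1 : q 1 j ≤ (n:ℝ) * p j := by
      have := hqle 1 j le_rfl
      simpa [Nat.choose_one_right] using this
    have hq0 : q 0 j ≤ 1 := by
      have : (1 - p j) ^ n ≤ 1 := pow_le_one₀ (by linarith) (by linarith)
      simpa [hq] using this
    have hdiv : q 1 j / n ≤ p j := by
      rw [div_le_iff₀ hnpos]; linarith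
    nlinarith [hq_nonneg 0 j]
  have hYlint : ∀ j, ∫⁻ ω, (‖Y j ω‖₊ : ENNReal) ∂μ ≤ ENNReal.ofReal (2 * p j) := by
    intro j
    have step : ∫⁻ ω, (‖Y j ω‖₊ : ENNReal) ∂μ ≤ ∫⁻ ω, (‖g j ω‖₊ : ENNReal) ∂μ := by
      refine lintegral_mono fun ω => ?_
      simp only [ENNReal.coe_le_coe, ← NNReal.coe_le_coe, coe_nnnorm]
      exact (hYg j ω).trans (le_abs_self _)
    refine step.trans ?_
    rw [key _ (hgint j) (hg0 j), hgval j]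
    exact ENNReal.ofReal_le_ofReal (hgbound j)
  have htsumYlint : ∑' j, ∫⁻ ω, (‖Y j ω‖₊ : ENNReal) ∂μ ≠ ⊤ := by
    refine ne_top_of_le_ne_top ?_ (ENNReal.tsum_le_tsum hYlint)
    rw [← ENNReal.ofReal_tsum_of_nonneg (fun j => by have := (hp j).1; positivity) (hsum.mul_left 2)]
    exact ENNReal.ofReal_ne_top
  -- a.e. identification of D as the tsum of the Y's, and convergence of partial sums
  have hgood : ∀ᵐ ω ∂μ, Tendsto (fun N => S N ω) atTop (nhds (D ω)) := by
    filter_upwards [hAae] with ω hA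
    have hYsummable : Summable (fun j => Y j ω) := by
      simp only [hY]
      exact (hA.div_const _).sub (hBsummable ω)
    have hDeq : ∑' j, Y j ω = D ω := by
      simp only [hY, hD]
      rw [Summable.tsum_sub (hA.div_const _) (hBsummable ω), tsum_div_const]
    have := hYsummable.hasSum.tendsto_sum_nat
    rw [hDeq] at this
    exact this
  have hDae : D =ᵐ[μ] fun ω => ∑' j, Y j ω := by
    filter_upwards [hAae] with ω hA
    simp only [hY, hD]
    rw [Summable.tsum_sub (hA.div_const _) (hBsummable ω), tsum_div_const]
  have hintD : ∫ ω, D ω ∂μ = ∑' j, ∫ ω, Y j ω ∂μ := by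
    rw [integral_congr_ae hDae]
    exact integral_tsum (fun j => (hYmeas j).aestronglyMeasurable) htsumYlint
  have hsumIntY : Summable (fun j => ∫ ω, Y j ω ∂μ) := by
    refine Summable.of_norm_bounded (g := fun j => 2 * p j) (hsum.mul_left 2) fun j => ?_
    refine (norm_integral_le_integral_norm _).trans ?_
    have : ∫ ω, ‖Y j ω‖ ∂μ ≤ ∫ ω, g j ω ∂μ :=
      integral_mono (hYintble j).norm (hgint j) (hYg j)
    rw [hgval j] at this
    exact this.trans (hgbound j)
  have hTendM : Tendsto (fun N => ∫ ω, S N ω ∂μ) atTop (nhds (∫ ω, D ω ∂μ)) := by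
    have e : ∀ N, ∫ ω, S N ω ∂μ = ∑ j ∈ Finset.range N, ∫ ω, Y j ω ∂μ := by
      intro N
      simp only [hS]
      exact integral_finset_sum _ (fun j _ => hYintble j)
    rw [hintD]
    simp only [e]
    exact hsumIntY.hasSum.tendsto_sum_nat
  -- the target bound
  set R : ℝ := (1/(n:ℝ)^2) * ∑' j, q 1 j + (2/((n:ℝ)*((n:ℝ)-1))) * ∑' j, q 2 j with hR
  have hc1 : (0:ℝ) ≤ 1/(n:ℝ)^2 := by positivity
  have hc2 : (0:ℝ) ≤ 2/((n:ℝ)*((n:ℝ)-1)) := by positivity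
  have hR0 : 0 ≤ R := by
    have t1 : 0 ≤ ∑' j, q 1 j := tsum_nonneg (fun j => hq_nonneg 1 j)
    have t2 : 0 ≤ ∑' j, q 2 j := tsum_nonneg (fun j => hq_nonneg 2 j)
    positivity
  -- variance of the partial sums
  have hSmeas : ∀ N, Measurable (S N) := by
    intro N
    simp only [hS]
    exact Finset.measurable_sum _ (fun j _ => hYmeas j)
  have hSsum : ∀ N, S N = ∑ j ∈ Finset.range N, Y j := by
    intro N; funext ω; simp [hS, Finset.sum_apply]
  have hSmem : ∀ N, MemLp (S N) 2 μ := by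
    intro N
    rw [hSsum N]
    exact memLp_finset_sum' _ (fun j _ => hY2 j)
  have hpair : ∀ N, Set.Pairwise ↑(Finset.range N) fun i j => IndepFun (Y i) (Y j) μ := by
    intro N i _ j _ hij
    have hXij : IndepFun (X i) (X j) μ := hindep.indepFun hij
    have := hXij.comp (φ := fun k => (if k = 1 then (1:ℝ) else 0) / n - (if k = 0 then p i else 0))
      (ψ := fun k => (if k = 1 then (1:ℝ) else 0) / n - (if k = 0 then p j else 0))
      measurable_from_top measurable_from_top
    exact this
  have hVarS : ∀ N, variance (S N) μ ≤ R := by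
    intro N
    rw [hSsum N, IndepFun.variance_sum (fun j _ => hY2 j) (hpair N)]
    have step : ∀ j ∈ Finset.range N, variance (Y j) μ
        ≤ (1/(n:ℝ)^2) * q 1 j + (2/((n:ℝ)*((n:ℝ)-1))) * q 2 j := by
      intro j _
      exact (hVarY j).trans (by linarith [hTerm j])
    refine (Finset.sum_le_sum step).trans ?_
    rw [Finset.sum_add_distrib, ← Finset.mul_sum, ← Finset.mul_sum]
    have t1 : ∑ j ∈ Finset.range N, q 1 j ≤ ∑' j, q 1 j :=
      Summable.sum_le_tsum _ (fun j _ => hq_nonneg 1 j) (hqsum 1 le_rfl)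
    have t2 : ∑ j ∈ Finset.range N, q 2 j ≤ ∑' j, q 2 j :=
      Summable.sum_le_tsum _ (fun j _ => hq_nonneg 2 j) (hqsum 2 (by norm_num))
    have := add_le_add (mul_le_mul_of_nonneg_left t1 hc1) (mul_le_mul_of_nonneg_left t2 hc2)
    exact this.trans_eq hR.symm
  have hEvarS : ∀ N, evariance (S N) μ ≤ ENNReal.ofReal R := by
    intro N
    have h1 : evariance (S N) μ = ENNReal.ofReal (variance (S N) μ) := by
      rw [variance, ENNReal.ofReal_toReal (hSmem N).evariance_lt_top.ne]
    rw [h1]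
    exact ENNReal.ofReal_le_ofReal (hVarS N)
  -- Fatou argument
  set m : ℝ := ∫ ω, D ω ∂μ with hm
  have haelim : ∀ᵐ ω ∂μ, Tendsto (fun N => ((‖S N ω - ∫ ω', S N ω' ∂μ‖₊ : ENNReal)) ^ 2)
      atTop (nhds ((‖D ω - m‖₊ : ENNReal) ^ 2)) := by
    filter_upwards [hgood] with ω hω
    have h1 : Tendsto (fun N => S N ω - ∫ ω', S N ω' ∂μ) atTop (nhds (D ω - m)) :=
      hω.sub hTendM
    exact ENNReal.Tendsto.pow (ENNReal.tendsto_coe.2 h1.nnnorm)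
  have hEvarD : evariance D μ ≤ ENNReal.ofReal R := by
    have h0 : evariance D μ = ∫⁻ ω, (‖D ω - m‖₊ : ENNReal) ^ 2 ∂μ := rfl
    rw [h0]
    have h1 : (fun ω => (‖D ω - m‖₊ : ENNReal) ^ 2)
        =ᵐ[μ] fun ω => liminf (fun N => ((‖S N ω - ∫ ω', S N ω' ∂μ‖₊ : ENNReal)) ^ 2) atTop := by
      filter_upwards [haelim] with ω hω
      exact hω.liminf_eq.symm
    rw [lintegral_congr_ae h1]
    refine (lintegral_liminf_le fun N => ?_).trans ?_
    · exact (((hSmeas N).sub measurable_const).enorm).pow_const 2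
    · have : ∀ N, ∫⁻ ω, ((‖S N ω - ∫ ω', S N ω' ∂μ‖₊ : ENNReal)) ^ 2 ∂μ ≤ ENNReal.ofReal R :=
        fun N => hEvarS N
      exact (Filter.liminf_le_liminf (Eventually.of_forall this)).trans_eq (liminf_const _)
  have hfinal : variance D μ ≤ R := by
    rw [variance]
    calc (evariance D μ).toReal ≤ (ENNReal.ofReal R).toReal :=
          ENNReal.toReal_mono ENNReal.ofReal_ne_top hEvarD
      _ = R := ENNReal.toReal_ofReal hR0
  refine hfinal.trans_eq ?_
  rw [hR, hIntTsum 1 le_rfl, hIntTsum 2 (by norm_num)]
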